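/- Assume the PRK coefficients satisfy b_i = B_i for all i and b_i A_{ij} + B_j a_{ji} − b_i B_j = 0 for all i, j = 1,…,s, and let h₀,…,h_{N−1} ∈ ℝ. For each n = 0,…,N−1 and i = 1,…,s let M_{n,i} be a real d × d matrix, N_{n,i} a real d × ν matrix, G_{n,i} ∈ ℝ^d and g_{n,i} ∈ ℝ^ν. Suppose δ₀,…,δ_N ∈ ℝ^d and Z_{n,i} ∈ ℝ^ν satisfy δ_{n+1} = δ_n + h_n Σ_{i=1}^s b_i d_{n,i} with d_{n,i} = M_{n,i} Δ_{n,i} + N_{n,i} Z_{n,i} and Δ_{n,i} = δ_n + h_n Σ_{j=1}^s a_{ij} d_{n,j}; suppose λ₀,…,λ_N ∈ ℝ^d satisfy λ_{n+1} = λ_n + h_n Σ_{i=1}^s B_i ℓ_{n,i} with ℓ_{n,i} = −M_{n,i}ᵀ Λ_{n,i} − G_{n,i} and Λ_{n,i} = λ_n + h_n Σ_{j=1}^s A_{ij} ℓ_{n,j}; and suppose N_{n,i}ᵀ Λ_{n,i} + g_{n,i} = 0 for all n and i. Then λ_Nᵀ δ_N − λ₀ᵀ δ₀ + Σ_{n=0}^{N−1}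 h_n Σ_{i=1}^s b_i ( G_{n,i}ᵀ Δ_{n,i} + g_{n,i}ᵀ Z_{n,i} ) = 0. -/

import Mathlib

open Matrix BigOperators

private lemma dot_sum {d s : ℕ} (v : Fin d → ℝ) (f : Fin s → Fin d → ℝ) :
    v ⬝ᵥ (∑ i, f i) = ∑ i, v ⬝ᵥ f i := by
  simp only [dotProduct, Finset.sum_apply, Finset.mul_sum]
  exact Finset.sum_comm

private lemma sum_dot {d s : ℕ} (v : Fin d → ℝ) (f : Fin s → Fin d → ℝ) :
    (∑ i, f i) ⬝ᵥ v = ∑ i, f i ⬝ᵥ v := by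
  simp only [dotProduct, Finset.sum_apply, Finset.sum_mul]
  exact Finset.sum_comm

private lemma sum_smul_dot {d s : ℕ} (c : Fin s → ℝ) (f : Fin s → Fin d → ℝ)
    (v : Fin d → ℝ) : (∑ i, c i • f i) ⬝ᵥ v = ∑ i, c i * (f i ⬝ᵥ v) := by
  rw [sum_dot]
  exact Finset.sum_congr rfl fun i _ => by rw [smul_dotProduct, smul_eq_mul]

private lemma dot_sum_smul {d s : ℕ} (c : Fin s → ℝ) (f : Fin s → Fin d → ℝ)
    (v : Fin d → ℝ) : v ⬝ᵥ (∑ i, c i • f i) = ∑ i, c i * (v ⬝ᵥ f i) := by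
  rw [dot_sum]
  exact Finset.sum_congr rfl fun i _ => by rw [dotProduct_smul, smul_eq_mul]

private lemma tele {N : ℕ} (f : Fin (N + 1) → ℝ) :
    ∑ n : Fin N, (f n.succ - f n.castSucc) = f (Fin.last N) - f 0 := by
  induction N with
  | zero => simp
  | succ m ih =>
      rw [Fin.sum_univ_castSucc]
      have : ∑ i : Fin m,
          (f (i.castSucc.succ) - f (i.castSucc.castSucc)) =
          ∑ i : Fin m, ((f ∘ Fin.castSucc) i.succ - (f ∘ Fin.castSucc) i.castSucc) := by
        apply Finset.sum_congr rfl
        intro i _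
        simp [Fin.succ_castSucc, -Fin.castSucc_succ]
      rw [this, ih (f ∘ Fin.castSucc)]
      simp only [Function.comp_apply, Fin.succ_last, Fin.castSucc_zero]
      ring

/-- The discrete generalised conservation identity of Section 5.2 (Mayer–Lagrange
costs): for a symplectic PRK discretisation of the optimality system with
costate slopes `ℓ = −Mᵀ Λ − G` and constraints `Nᵀ Λ + g = 0`,
`λ_Nᵀ δ_N − λ₀ᵀ δ₀ + Σ_n h_n Σ_i b_i (G_{n,i}ᵀ Δ_{n,i} + g_{n,i}ᵀ Z_{n,i}) = 0`. -/
theorem stmt_19 (d ν s N : ℕ)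
    (a A : Fin s → Fin s → ℝ) (b B : Fin s → ℝ)
    (hbB : ∀ i, b i = B i)
    (hsymp : ∀ i j, b i * A i j + B j * a j i - b i * B j = 0)
    (h : Fin N → ℝ)
    (M : Fin N → Fin s → Matrix (Fin d) (Fin d) ℝ)
    (Nm : Fin N → Fin s → Matrix (Fin d) (Fin ν) ℝ)
    (G : Fin N → Fin s → Fin d → ℝ) (g : Fin N → Fin s → Fin ν → ℝ)
    (δ lam : Fin (N + 1) → Fin d → ℝ)
    (dd Δ ell Lam : Fin N → Fin s → Fin d → ℝ)
    (Z : Fin N → Fin s → Fin ν → ℝ)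
    (hδstep : ∀ n : Fin N, δ n.succ = δ n.castSucc + h n • ∑ i, b i • dd n i)
    (hdd : ∀ (n : Fin N) (i : Fin s),
      dd n i = (M n i).mulVec (Δ n i) + (Nm n i).mulVec (Z n i))
    (hΔ : ∀ (n : Fin N) (i : Fin s),
      Δ n i = δ n.castSucc + h n • ∑ j, a i j • dd n j)
    (hlamstep : ∀ n : Fin N, lam n.succ = lam n.castSucc + h n • ∑ i, B i • ell n i)
    (hell : ∀ (n : Fin N) (i : Fin s),
      ell n i = -((M n i)ᵀ.mulVec (Lam n i)) - G n i)
    (hLam : ∀ (n : Fin N) (i : Fin s),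
      Lam n i = lam n.castSucc + h n • ∑ j, A i j • ell n j)
    (hconstraint : ∀ (n : Fin N) (i : Fin s),
      (Nm n i)ᵀ.mulVec (Lam n i) + g n i = 0) :
    lam (Fin.last N) ⬝ᵥ δ (Fin.last N) - lam 0 ⬝ᵥ δ 0 +
      ∑ n : Fin N, h n * ∑ i, b i * (G n i ⬝ᵥ Δ n i + g n i ⬝ᵥ Z n i) = 0 := by
  have hB : B = b := funext fun i => (hbB i).symm
  simp only [hB] at hlamstep hLam hsymp
  -- per-step identity
  have main : ∀ n : Fin N,
      h n * ∑ i, b i * (G n i ⬝ᵥ Δ n i + g n i ⬝ᵥ Z n i) =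
        -(lam n.succ ⬝ᵥ δ n.succ - lam n.castSucc ⬝ᵥ δ n.castSucc) := by
    intro n
    -- E2 : G⬝Δ + g⬝Z = -(Λ⬝d + ℓ⬝Δ)
    have E2 : ∀ i, G n i ⬝ᵥ Δ n i + g n i ⬝ᵥ Z n i
        = -(Lam n i ⬝ᵥ dd n i + ell n i ⬝ᵥ Δ n i) := by
      intro i
      have hg : (Nm n i)ᵀ.mulVec (Lam n i) = -(g n i) :=
        eq_neg_of_add_eq_zero_left (hconstraint n i)
      have h1 : Lam n i ⬝ᵥ dd n i
          = ((M n i)ᵀ.mulVec (Lam n i)) ⬝ᵥ Δ n i - g n i ⬝ᵥ Z n i := by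
        rw [hdd n i, dotProduct_add, dotProduct_mulVec, dotProduct_mulVec,
          ← mulVec_transpose, ← mulVec_transpose, hg, neg_dotProduct]
        ring
      have h2 : ell n i ⬝ᵥ Δ n i
          = -(((M n i)ᵀ.mulVec (Lam n i)) ⬝ᵥ Δ n i) - G n i ⬝ᵥ Δ n i := by
        rw [hell n i, sub_dotProduct, neg_dotProduct]
      rw [h1, h2]; ring
    set ln := lam n.castSucc with hln
    set dn := δ n.castSucc with hdn
    have hΛd : ∀ i, Lam n i ⬝ᵥ dd n i
        = ln ⬝ᵥ dd n i + h n * ∑ j, A i j * (ell n j ⬝ᵥ dd n i) := by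
      intro i
      rw [hLam n i, add_dotProduct, smul_dotProduct, sum_smul_dot, smul_eq_mul]
    have hℓΔ : ∀ i, ell n i ⬝ᵥ Δ n i
        = ell n i ⬝ᵥ dn + h n * ∑ j, a i j * (ell n i ⬝ᵥ dd n j) := by
      intro i
      rw [hΔ n i, dotProduct_add, dotProduct_smul, dot_sum_smul, smul_eq_mul]
    have hnew : lam n.succ ⬝ᵥ δ n.succ
        = ln ⬝ᵥ dn + h n * ∑ j, b j * (ln ⬝ᵥ dd n j)
          + h n * ∑ i, b i * (ell n i ⬝ᵥ dn)
          + h n * h n * ∑ i, ∑ j, b i * b j * (ell n i ⬝ᵥ dd n j) := by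
      rw [hlamstep n, hδstep n, add_dotProduct, dotProduct_add, dotProduct_add]
      have t1 : ln ⬝ᵥ (h n • ∑ j, b j • dd n j) = h n * ∑ j, b j * (ln ⬝ᵥ dd n j) := by
        rw [dotProduct_smul, dot_sum_smul, smul_eq_mul]
      have t2 : (h n • ∑ i, b i • ell n i) ⬝ᵥ dn = h n * ∑ i, b i * (ell n i ⬝ᵥ dn) := by
        rw [smul_dotProduct, sum_smul_dot, smul_eq_mul]
      have t3 : (h n • ∑ i, b i • ell n i) ⬝ᵥ (h n • ∑ j, b j • dd n j)
          = h n * h n * ∑ i, ∑ j, b i * b j * (ell n i ⬝ᵥ dd n j) := by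
        rw [smul_dotProduct, smul_eq_mul, dotProduct_smul, smul_eq_mul, sum_smul_dot]
        have e : ∑ i, b i * (ell n i ⬝ᵥ ∑ j, b j • dd n j)
            = ∑ i, ∑ j, b i * b j * (ell n i ⬝ᵥ dd n j) := by
          apply Finset.sum_congr rfl
          intro i _
          rw [dot_sum_smul, Finset.mul_sum]
          exact Finset.sum_congr rfl fun j _ => by ring
        rw [e]; ring
      rw [t1, t2, t3]; ring
    -- the symplecticity double-sum identity
    have hdouble : ∑ i, ∑ j, b i * b j * (ell n i ⬝ᵥ dd n j)
        = ∑ i, ∑ j, b i * A i j * (ell n j ⬝ᵥ dd n i)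
          + ∑ i, ∑ j, b i * a i j * (ell n i ⬝ᵥ dd n j) := by
      have hswap : ∑ i, ∑ j, b i * A i j * (ell n j ⬝ᵥ dd n i)
          = ∑ i, ∑ j, b j * A j i * (ell n i ⬝ᵥ dd n j) := by rw [Finset.sum_comm]
      rw [hswap, ← Finset.sum_add_distrib]
      apply Finset.sum_congr rfl
      intro i _
      rw [← Finset.sum_add_distrib]
      apply Finset.sum_congr rfl
      intro j _
      linear_combination (-(ell n i ⬝ᵥ dd n j)) * hsymp j i
    -- put everything together
    rw [Finset.sum_congr rfl (fun i _ => by rw [E2 i, hΛd i, hℓΔ i])]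
    rw [hnew]
    have eA : ∀ i : Fin s, b i * ∑ j, A i j * (ell n j ⬝ᵥ dd n i)
        = ∑ j, b i * A i j * (ell n j ⬝ᵥ dd n i) := by
      intro i
      rw [Finset.mul_sum]
      exact Finset.sum_congr rfl fun j _ => by ring
    have ea : ∀ i : Fin s, b i * ∑ j, a i j * (ell n i ⬝ᵥ dd n j)
        = ∑ j, b i * a i j * (ell n i ⬝ᵥ dd n j) := by
      intro i
      rw [Finset.mul_sum]
      exact Finset.sum_congr rfl fun j _ => by ring
    have lhs_eq : ∑ i, b i * -(ln ⬝ᵥ dd n i + h n * ∑ j, A i j * (ell n j ⬝ᵥ dd n i)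
          + (ell n i ⬝ᵥ dn + h n * ∑ j, a i j * (ell n i ⬝ᵥ dd n j)))
        = -(∑ i, b i * (ln ⬝ᵥ dd n i)) - (∑ i, b i * (ell n i ⬝ᵥ dn))
          - h n * ∑ i, ∑ j, b i * A i j * (ell n j ⬝ᵥ dd n i)
          - h n * ∑ i, ∑ j, b i * a i j * (ell n i ⬝ᵥ dd n j) := by
      calc ∑ i, b i * -(ln ⬝ᵥ dd n i + h n * ∑ j, A i j * (ell n j ⬝ᵥ dd n i)
              + (ell n i ⬝ᵥ dn + h n * ∑ j, a i j * (ell n i ⬝ᵥ dd n j)))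
          = ∑ i, (-(b i * (ln ⬝ᵥ dd n i)) - b i * (ell n i ⬝ᵥ dn)
              - h n * ∑ j, b i * A i j * (ell n j ⬝ᵥ dd n i)
              - h n * ∑ j, b i * a i j * (ell n i ⬝ᵥ dd n j)) := by
            apply Finset.sum_congr rfl
            intro i _
            rw [← eA i, ← ea i]
            ring
        _ = _ := by
            simp only [Finset.sum_sub_distrib, Finset.sum_neg_distrib, ← Finset.mul_sum]
    rw [lhs_eq]
    linear_combination (h n * h n) * hdouble
  -- telescope
  have key : ∑ n : Fin N, h n * ∑ i, b i * (G n i ⬝ᵥ Δ n i + g n i ⬝ᵥ Z n i)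
      = -(∑ n : Fin N, (lam n.succ ⬝ᵥ δ n.succ - lam n.castSucc ⬝ᵥ δ n.castSucc)) := by
    rw [← Finset.sum_neg_distrib]
    exact Finset.sum_congr rfl fun n _ => main n
  rw [key, tele (fun k => lam k ⬝ᵥ δ k)]
  ring
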